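/- Let λ > 0, L > 0 and x ∈ ℝⁿ, set T = T_{λ,L}(x), and suppose |supp(x) ∪ supp(T)| ≤ s for an integer s ≥ 1 with L ≥ ρ₊(A, s). Then φ_λ(T) ≤ ψ_{λ,L}(x; T), and consequently φ_λ(T) ≤ φ_λ(x) − (1/(2L))‖g_{λ,L}(x)‖₂². -/

import Mathlib

open scoped BigOperators
open Matrix

noncomputable section

namespace PGH

/-- Euclidean dot product on `Fin n → ℝ`. -/
def dot {n : ℕ} (x y : Fin n → ℝ) : ℝ := ∑ i, x i * y i

/-- Squared Euclidean norm. -/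
def sqnorm {n : ℕ} (x : Fin n → ℝ) : ℝ := ∑ i, (x i) ^ 2

/-- Euclidean (ℓ₂) norm. -/
noncomputable def l2 {n : ℕ} (x : Fin n → ℝ) : ℝ := Real.sqrt (sqnorm x)

/-- ℓ₁ norm. -/
def l1 {n : ℕ} (x : Fin n → ℝ) : ℝ := ∑ i, |x i|

/-- ℓ∞ norm (maximum absolute coordinate). -/
noncomputable def linf {n : ℕ} (x : Fin n → ℝ) : ℝ := ⨆ i, |x i|

/-- Support of a vector. -/
def supp {n : ℕ} (x : Fin n → ℝ) : Finset (Fin n) := Finset.univ.filter (fun i => x i ≠ 0)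

/-- Number of nonzero coordinates. -/
def l0 {n : ℕ} (x : Fin n → ℝ) : ℕ := (supp x).card

/-- Number of nonzero coordinates within the index set `S`
(i.e. `‖x_S‖₀` for the restriction of `x` to `S`). -/
def l0on {n : ℕ} (S : Finset (Fin n)) (x : Fin n → ℝ) : ℕ :=
  (S.filter (fun i => x i ≠ 0)).card

/-- ℓ₁ norm of the restriction of `x` to the index set `S`. -/
def l1on {n : ℕ} (S : Finset (Fin n)) (x : Fin n → ℝ) : ℝ := ∑ i ∈ S, |x i|

/-- Gradient of `f(x) = (1/2)‖Ax - b‖₂²`, namely `Aᵀ(Ax - b)`. -/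
def grad {m n : ℕ} (A : Matrix (Fin m) (Fin n) ℝ) (b : Fin m → ℝ) (x : Fin n → ℝ) :
    Fin n → ℝ :=
  Aᵀ.mulVec (A.mulVec x - b)

/-- Least-squares objective `f(x) = (1/2)‖Ax - b‖₂²`. -/
def fls {m n : ℕ} (A : Matrix (Fin m) (Fin n) ℝ) (b : Fin m → ℝ) (x : Fin n → ℝ) : ℝ :=
  sqnorm (A.mulVec x - b) / 2

/-- ℓ₁-regularized least-squares objective `φ_λ(x) = f(x) + λ‖x‖₁`. -/
def phi {m n : ℕ} (A : Matrix (Fin m) (Fin n) ℝ) (b : Fin m → ℝ) (lam : ℝ)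
    (x : Fin n → ℝ) : ℝ :=
  fls A b x + lam * l1 x

/-- Restricted maximal eigenvalue `ρ₊(A, s)`. -/
noncomputable def rhoPlus {m n : ℕ} (A : Matrix (Fin m) (Fin n) ℝ) (s : ℕ) : ℝ :=
  sSup {r | ∃ x : Fin n → ℝ, x ≠ 0 ∧ l0 x ≤ s ∧ r = sqnorm (A.mulVec x) / sqnorm x}

/-- Restricted minimal eigenvalue `ρ₋(A, s)`. -/
noncomputable def rhoMinus {m n : ℕ} (A : Matrix (Fin m) (Fin n) ℝ) (s : ℕ) : ℝ :=
  sInf {r | ∃ x : Fin n → ℝ, x ≠ 0 ∧ l0 x ≤ s ∧ r = sqnorm (A.mulVec x) / sqnorm x}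

/-- `ξ` is a subgradient of the ℓ₁ norm at `x`. -/
def IsSubgrad {n : ℕ} (x ξ : Fin n → ℝ) : Prop :=
  ∀ i, (x i ≠ 0 → ξ i = Real.sign (x i)) ∧ (x i = 0 → |ξ i| ≤ 1)

/-- Optimality residue `ω_λ(x) = min_{ξ ∈ ∂‖x‖₁} ‖Aᵀ(Ax−b) + λξ‖_∞`. -/
noncomputable def omega {m n : ℕ} (A : Matrix (Fin m) (Fin n) ℝ) (b : Fin m → ℝ)
    (lam : ℝ) (x : Fin n → ℝ) : ℝ :=
  sInf {r | ∃ ξ : Fin n → ℝ, IsSubgrad x ξ ∧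
    r = linf (fun i => grad A b x i + lam * ξ i)}

/-- The local model `ψ_{λ,L}(y; x)`. -/
def psi {m n : ℕ} (A : Matrix (Fin m) (Fin n) ℝ) (b : Fin m → ℝ) (lam L : ℝ)
    (y x : Fin n → ℝ) : ℝ :=
  fls A b y + dot (grad A b y) (x - y) + L / 2 * sqnorm (x - y) + lam * l1 x

/-- The noise-domination condition
`λ ≥ max{4, (γ+1)/((1−δ')γ−(1+δ'))} ⬝ ‖Aᵀz‖_∞`. -/
def noiseCond {m n : ℕ} (A : Matrix (Fin m) (Fin n) ℝ) (z : Fin m → ℝ)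
    (dp gam lam : ℝ) : Prop :=
  lam ≥ max 4 ((gam + 1) / ((1 - dp) * gam - (1 + dp))) * linf (Aᵀ.mulVec z)


lemma dot_adj {m n : ℕ} (A : Matrix (Fin m) (Fin n) ℝ) (w : Fin m → ℝ) (v : Fin n → ℝ) :
    dot (Aᵀ.mulVec w) v = dot w (A.mulVec v) := by
  simp only [dot, Matrix.mulVec, dotProduct, Matrix.transpose_apply,
    Finset.sum_mul, Finset.mul_sum]
  rw [Finset.sum_comm]
  apply Finset.sum_congr rfl; intro i _
  apply Finset.sum_congr rfl; intro j _
  ring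

lemma sqnorm_add' {n : ℕ} (u w : Fin n → ℝ) :
    sqnorm (u + w) = sqnorm u + 2 * dot u w + sqnorm w := by
  simp only [sqnorm, dot, Pi.add_apply, Finset.mul_sum, ← Finset.sum_add_distrib]
  apply Finset.sum_congr rfl; intro i _; ring

lemma sqnorm_nonneg' {n : ℕ} (v : Fin n → ℝ) : 0 ≤ sqnorm v :=
  Finset.sum_nonneg fun i _ => sq_nonneg _

lemma sqnorm_neg_sub {n : ℕ} (u w : Fin n → ℝ) : sqnorm (u - w) = sqnorm (w - u) := by
  unfold sqnorm
  apply Finset.sum_congr rfl; intro i _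
  simp only [Pi.sub_apply]; ring

lemma fls_expand {m n : ℕ} (A : Matrix (Fin m) (Fin n) ℝ) (b : Fin m → ℝ) (x T : Fin n → ℝ) :
    fls A b T = fls A b x + dot (grad A b x) (T - x) + sqnorm (A.mulVec (T - x)) / 2 := by
  have h1 : A.mulVec T - b = (A.mulVec x - b) + A.mulVec (T - x) := by
    rw [Matrix.mulVec_sub]; abel
  rw [fls, h1, sqnorm_add', grad, dot_adj]
  rw [fls]; ring

lemma sqnorm_mulVec_le {m n : ℕ} (A : Matrix (Fin m) (Fin n) ℝ) (w : Fin n → ℝ) :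
    sqnorm (A.mulVec w) ≤ (∑ i, ∑ j, (A i j) ^ 2) * sqnorm w := by
  unfold sqnorm
  rw [Finset.sum_mul]
  apply Finset.sum_le_sum
  intro i _
  calc (A.mulVec w i) ^ 2 = (∑ j, A i j * w j) ^ 2 := by
        simp [Matrix.mulVec, dotProduct]
    _ ≤ (∑ j, (A i j) ^ 2) * ∑ j, (w j) ^ 2 :=
        Finset.sum_mul_sq_le_sq_mul_sq _ _ _

lemma rhoPlus_bound {m n : ℕ} (A : Matrix (Fin m) (Fin n) ℝ) (s : ℕ) (v : Fin n → ℝ)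
    (hv : v ≠ 0) (hl0 : l0 v ≤ s) :
    sqnorm (A.mulVec v) ≤ rhoPlus A s * sqnorm v := by
  have hvpos : 0 < sqnorm v := by
    obtain ⟨i, hi⟩ := Function.ne_iff.mp hv
    exact Finset.sum_pos' (fun j _ => sq_nonneg _)
      ⟨i, Finset.mem_univ i, pow_two_pos_of_ne_zero hi⟩
  have hmem : sqnorm (A.mulVec v) / sqnorm v ∈
      {r | ∃ x : Fin n → ℝ, x ≠ 0 ∧ l0 x ≤ s ∧ r = sqnorm (A.mulVec x) / sqnorm x} :=
    ⟨v, hv, hl0, rfl⟩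
  have hbdd : BddAbove
      {r | ∃ x : Fin n → ℝ, x ≠ 0 ∧ l0 x ≤ s ∧ r = sqnorm (A.mulVec x) / sqnorm x} := by
    refine ⟨∑ i, ∑ j, (A i j) ^ 2, ?_⟩
    rintro r ⟨w, hw, _, rfl⟩
    have hwpos : 0 < sqnorm w := by
      obtain ⟨i, hi⟩ := Function.ne_iff.mp hw
      exact Finset.sum_pos' (fun j _ => sq_nonneg _)
        ⟨i, Finset.mem_univ i, pow_two_pos_of_ne_zero hi⟩
    rw [div_le_iff₀ hwpos]
    exact sqnorm_mulVec_le A w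
  have hle : sqnorm (A.mulVec v) / sqnorm v ≤ rhoPlus A s := le_csSup hbdd hmem
  calc sqnorm (A.mulVec v) = sqnorm (A.mulVec v) / sqnorm v * sqnorm v := by
        field_simp
    _ ≤ rhoPlus A s * sqnorm v := by
        exact mul_le_mul_of_nonneg_right hle hvpos.le

theorem stmt16 {m n : ℕ} (A : Matrix (Fin m) (Fin n) ℝ) (b : Fin m → ℝ)
    (lam L : ℝ) (hlam : 0 < lam) (hL : 0 < L)
    (x T : Fin n → ℝ) (hT : ∀ u, psi A b lam L x T ≤ psi A b lam L x u)
    (s : ℕ) (hs : 1 ≤ s) (hsupp : (supp x ∪ supp T).card ≤ s)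
    (hLs : rhoPlus A s ≤ L) :
    phi A b lam T ≤ psi A b lam L x T ∧
    phi A b lam T ≤ phi A b lam x - 1 / (2 * L) * sqnorm (fun i => L * (x i - T i)) := by

  -- notation
  set g : Fin n → ℝ := grad A b x with hg
  have hsqTx : sqnorm (A.mulVec (T - x)) ≤ L * sqnorm (T - x) := by
    by_cases hzero : T - x = 0
    · rw [hzero, Matrix.mulVec_zero]
      simp [sqnorm]
    · have hsub : supp (T - x) ⊆ supp x ∪ supp T := by
        intro i hi
        simp only [supp, Finset.mem_filter, Finset.mem_univ, true_and, Pi.sub_apply] at hi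
        simp only [Finset.mem_union, supp, Finset.mem_filter, Finset.mem_univ, true_and]
        by_contra hcon
        push_neg at hcon
        exact hi (by rw [hcon.1, hcon.2, sub_zero])
      have hl0 : l0 (T - x) ≤ s :=
        le_trans (Finset.card_le_card hsub) hsupp
      calc sqnorm (A.mulVec (T - x)) ≤ rhoPlus A s * sqnorm (T - x) :=
            rhoPlus_bound A s (T - x) hzero hl0
        _ ≤ L * sqnorm (T - x) :=
            mul_le_mul_of_nonneg_right hLs (sqnorm_nonneg' _)
  -- Part 1
  have hexp := fls_expand A b x T
  have part1 : phi A b lam T ≤ psi A b lam L x T := by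
    rw [phi, psi, hexp]
    have : sqnorm (A.mulVec (T - x)) / 2 ≤ L / 2 * sqnorm (T - x) := by linarith
    linarith
  -- psi at x equals phi at x
  have hpsixx : psi A b lam L x x = phi A b lam x := by
    rw [psi, phi]
    simp [dot, sqnorm]
  -- strong convexity step
  have hkey : ∀ t : ℝ, 0 < t → t ≤ 1 →
      psi A b lam L x T + L / 2 * (1 - t) * sqnorm (T - x) ≤ psi A b lam L x x := by
    intro t ht ht1
    set u : Fin n → ℝ := fun i => (1 - t) * T i + t * x i with hu
    have h1 : dot g (u - x) = (1 - t) * dot g (T - x) := by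
      unfold dot
      rw [Finset.mul_sum]
      apply Finset.sum_congr rfl; intro i _
      simp only [hu, Pi.sub_apply]; ring
    have h2 : sqnorm (u - x) = (1 - t) ^ 2 * sqnorm (T - x) := by
      unfold sqnorm
      rw [Finset.mul_sum]
      apply Finset.sum_congr rfl; intro i _
      simp only [hu, Pi.sub_apply]; ring
    have h3 : l1 u ≤ (1 - t) * l1 T + t * l1 x := by
      unfold l1
      rw [Finset.mul_sum, Finset.mul_sum, ← Finset.sum_add_distrib]
      apply Finset.sum_le_sum
      intro i _
      calc |u i| ≤ |(1 - t) * T i| + |t * x i| := abs_add_le _ _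
        _ = (1 - t) * |T i| + t * |x i| := by
            rw [abs_mul, abs_mul, abs_of_nonneg (by linarith), abs_of_nonneg ht.le]
    have hTu := hT u
    simp only [psi] at hTu ⊢
    rw [h1, h2] at hTu
    simp only [← hg] at hTu ⊢
    have hxx0 : dot g (x - x) = 0 := by simp [dot]
    have hxx1 : sqnorm (x - x) = 0 := by simp [sqnorm]
    rw [hxx0, hxx1]
    have hlam3 : lam * l1 u ≤ lam * ((1 - t) * l1 T + t * l1 x) :=
      mul_le_mul_of_nonneg_left h3 hlam.le
    have hq : 0 ≤ sqnorm (T - x) := sqnorm_nonneg' _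
    nlinarith [hTu, hlam3]
  -- limit t → 0
  have hmain : psi A b lam L x T + L / 2 * sqnorm (T - x) ≤ psi A b lam L x x := by
    set c : ℝ := L / 2 * sqnorm (T - x) with hc
    have hc0 : 0 ≤ c := mul_nonneg (by linarith) (sqnorm_nonneg' _)
    have hD : 0 ≤ psi A b lam L x x - psi A b lam L x T := by
      have h1' := hkey 1 one_pos le_rfl
      have : L / 2 * (1 - 1) * sqnorm (T - x) = 0 := by ring
      linarith
    by_contra hcon
    push_neg at hcon
    have hcpos : 0 < c := by linarith
    set D : ℝ := psi A b lam L x x - psi A b lam L x T with hDdef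
    have hDc : D < c := by simp only [hDdef]; linarith
    set t : ℝ := (c - D) / (2 * c) with htdef
    have htpos : 0 < t := by
      apply div_pos; linarith; linarith
    have ht1 : t ≤ 1 := by
      rw [htdef, div_le_one (by linarith)]
      linarith
    have := hkey t htpos ht1
    have hct : c * t = (c - D) / 2 := by
      rw [htdef]; field_simp
    nlinarith [this]
  -- Part 2
  refine ⟨part1, ?_⟩
  have hscale : 1 / (2 * L) * sqnorm (fun i => L * (x i - T i)) = L / 2 * sqnorm (T - x) := by
    unfold sqnorm
    rw [Finset.mul_sum, Finset.mul_sum]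
    apply Finset.sum_congr rfl; intro i _
    simp only [Pi.sub_apply]
    field_simp
    ring
  rw [hscale]
  rw [hpsixx] at hmain
  linarith


end PGH
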